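/- Let α < 0, β ∈ ℝ, ρ(s) = exp(α s²/2 + β s), and for l ∈ ℕ define Ψ_l(s) = (1/ρ(s)) · (d/ds)^l ρ(s). Then there exists a nonzero real constant c such that Ψ_l(s) = c · He_l(√(−α)·s − β/√(−α)) for all s ∈ ℝ, where He_l denotes the l-th probabilists' Hermite polynomial (so that the polynomials of hypergeometric type for σ(s) = 1, τ(s) = αs + β are, up to a multiplicative constant, Hermite polynomials in the rescaled variable). -/

import Mathlib

theorem rodrigues_sigma_one_is_hermite
    (α β : ℝ) (hα : α < 0)
    (ρ : ℝ → ℝ) (hρ : ∀ s, ρ s = Real.exp (α * s ^ 2 / 2 + β * s))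
    (l : ℕ) (Ψ : ℝ → ℝ)
    (hΨ : ∀ s, Ψ s = (1 / ρ s) * iteratedDeriv l ρ s) :
    ∃ c : ℝ, c ≠ 0 ∧ ∀ s : ℝ,
      Ψ s = c * Polynomial.aeval (Real.sqrt (-α) * s - β / Real.sqrt (-α))
              (Polynomial.hermite l) := by
  set a : ℝ := Real.sqrt (-α) with ha
  have ha0 : 0 < a := Real.sqrt_pos.mpr (by linarith)
  have ha2 : a ^ 2 = -α := Real.sq_sqrt (by linarith)
  set b : ℝ := -(β / a) with hb
  set g : ℝ → ℝ := fun y => Real.exp (-(y ^ 2 / 2)) with hg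
  set K : ℝ := Real.exp (-(β ^ 2) / (2 * α)) with hK
  have hg_cd : ContDiff ℝ (⊤ : ℕ∞) g := by
    exact Real.contDiff_exp.comp (((contDiff_id.pow 2).div_const 2).neg)
  have hρeq : ∀ s, ρ s = K * g (a * s + b) := by
    intro s
    rw [hρ, hK, hg, ← Real.exp_add]
    congr 1
    have hab : a * s + b = a * s - β / a := by rw [hb]; ring
    have haa : a ≠ 0 := ne_of_gt ha0
    have hαa : α = -(a ^ 2) := by rw [ha2]; ring
    rw [hab, hαa]
    field_simp
    ring
  have hK0 : K ≠ 0 := Real.exp_ne_zero _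
  have hgs0 : ∀ y, g y ≠ 0 := fun y => Real.exp_ne_zero _
  have key : ∀ s, iteratedDeriv l ρ s
      = K * (a ^ l * ((-1 : ℝ) ^ l *
          Polynomial.aeval (a * s + b) (Polynomial.hermite l) * g (a * s + b))) := by
    intro s
    have hρfun : ρ = fun s => K * g (a * s + b) := funext hρeq
    have hcomp : ContDiff ℝ (⊤ : ℕ∞) (fun s : ℝ => g (a * s + b)) :=
      hg_cd.comp (by fun_prop)
    have h1 : iteratedDeriv l ρ s
        = K * iteratedDeriv l (fun s => g (a * s + b)) s := by
      rw [hρfun, ← iteratedDerivWithin_univ, ← iteratedDerivWithin_univ]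
      exact iteratedDerivWithin_const_mul (Set.mem_univ s) uniqueDiffOn_univ K
        (hcomp.contDiffWithinAt.of_le (by exact_mod_cast (le_top : (l : ℕ∞) ≤ ⊤)))
    have h2 : iteratedDeriv l (fun s => g (a * s + b)) s
        = a ^ l * iteratedDeriv l (fun x => g (x + b)) (a * s) := by
      have hgb : ContDiff ℝ (l : ℕ∞) (fun x : ℝ => g (x + b)) :=
        (hg_cd.of_le (by exact_mod_cast le_top)).comp (by fun_prop)
      have := iteratedDeriv_comp_const_mul (n := l) (f := fun x => g (x + b)) hgb a
      exact congrFun this s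
    have h3 : iteratedDeriv l (fun x => g (x + b)) (a * s)
        = iteratedDeriv l g (a * s + b) :=
      congrFun (iteratedDeriv_comp_add_const l g b) (a * s)
    have h4 : iteratedDeriv l g (a * s + b)
        = (-1 : ℝ) ^ l * Polynomial.aeval (a * s + b) (Polynomial.hermite l)
            * g (a * s + b) := by
      rw [iteratedDeriv_eq_iterate]
      exact Polynomial.deriv_gaussian_eq_hermite_mul_gaussian l (a * s + b)
    rw [h1, h2, h3, h4]
  refine ⟨(-1 : ℝ) ^ l * a ^ l, by positivity, fun s => ?_⟩
  have habs : a * s + b = a * s - β / a := by rw [hb]; ring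
  rw [hΨ, key s, hρeq s, ← habs]
  have hρne : K * g (a * s + b) ≠ 0 := mul_ne_zero hK0 (hgs0 _)
  field_simp
  exact mul_div_cancel_left₀ _ (hgs0 _)
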